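/- Gauge equivalence of ρ-generating functions: let s ∈ [0,∞)^n \ {0}, E_s^n := {y ∈ R^n : Σ_i s_i e^{y_i} = 1}, and let H₁, H₂ ∈ C²(U, R) on a neighborhood U ⊃ E_s^n. Then H₁ and H₂ generate the same portfolio weights π (via π = λρ + ∇H(y), λ = 1 − 1'∇H(y), with ρ_i = s_i e^{y_i}) at every point y ∈ E_s^n if and only if H₁ − H₂ is constant on E_s^n. -/

import Mathlib

private lemma ggf_phi_pos {n : ℕ} {s : Fin n → ℝ} (hs : ∀ i, 0 ≤ s i) {k : Fin n} (hk : 0 < s k)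
    (y : Fin n → ℝ) : 0 < ∑ i, s i * Real.exp (y i) :=
  Finset.sum_pos' (fun i _ => mul_nonneg (hs i) (Real.exp_pos _).le)
    ⟨k, Finset.mem_univ k, mul_pos hk (Real.exp_pos _)⟩

private lemma ggf_clm_apply (n : ℕ) (L : (Fin n → ℝ) →L[ℝ] ℝ) (v : Fin n → ℝ) :
    L v = ∑ i, v i * L (Pi.single i 1) := by
  have hv : v = ∑ i, v i • (Pi.single i (1 : ℝ) : Fin n → ℝ) := by
    funext j
    simp [Finset.sum_apply, Pi.single_apply]
  conv_lhs => rw [hv]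
  simp [map_sum, map_smul, smul_eq_mul]

private noncomputable def ggf_curve (n : ℕ) (s y₀ w : Fin n → ℝ) (t : ℝ) : Fin n → ℝ :=
  fun i => (y₀ i + t * w i) - Real.log (∑ j, s j * Real.exp (y₀ j + t * w j))

private noncomputable def ggf_vel (n : ℕ) (s y₀ w : Fin n → ℝ) (t : ℝ) : Fin n → ℝ :=
  fun i => w i - (∑ j, s j * Real.exp (y₀ j + t * w j) * w j)
      / (∑ j, s j * Real.exp (y₀ j + t * w j))

private lemma ggf_curve_mem {n : ℕ} {s : Fin n → ℝ} (hs : ∀ i, 0 ≤ s i) {k : Fin n}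
    (hk : 0 < s k) (y₀ w : Fin n → ℝ) (t : ℝ) :
    ∑ i, s i * Real.exp (ggf_curve n s y₀ w t i) = 1 := by
  have hpos := ggf_phi_pos hs hk (fun j => y₀ j + t * w j)
  simp only [ggf_curve, Real.exp_sub, Real.exp_log hpos, mul_div_assoc']
  rw [← Finset.sum_div, div_self hpos.ne']

private lemma ggf_curve_zero {n : ℕ} {s : Fin n → ℝ} (y₀ w : Fin n → ℝ)
    (hy : ∑ j, s j * Real.exp (y₀ j) = 1) : ggf_curve n s y₀ w 0 = y₀ := by
  funext i
  simp [ggf_curve, hy]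

private lemma ggf_curve_hasDerivAt {n : ℕ} {s : Fin n → ℝ} (hs : ∀ i, 0 ≤ s i) {k : Fin n}
    (hk : 0 < s k) (y₀ w : Fin n → ℝ) (t : ℝ) :
    HasDerivAt (ggf_curve n s y₀ w) (ggf_vel n s y₀ w t) t := by
  rw [hasDerivAt_pi]
  intro i
  have hφ : HasDerivAt (fun u => ∑ j, s j * Real.exp (y₀ j + u * w j))
      (∑ j, s j * (Real.exp (y₀ j + t * w j) * w j)) t := by
    refine HasDerivAt.fun_sum fun j _ => ?_
    exact (((hasDerivAt_mul_const (w j)).const_add (y₀ j)).exp).const_mul (s j)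
  have hne : (∑ j, s j * Real.exp (y₀ j + t * w j)) ≠ 0 :=
    (ggf_phi_pos hs hk (fun j => y₀ j + t * w j)).ne'
  have := ((hasDerivAt_mul_const (w i)).const_add (y₀ i)).sub (hφ.log hne)
  convert this using 1
  · funext u; rfl
  simp only [ggf_vel]
  congr 1
  congr 1
  exact Finset.sum_congr rfl fun j _ => by ring

private lemma ggf_tangent {n : ℕ} {s : Fin n → ℝ} (hs : ∀ i, 0 ≤ s i) {k : Fin n}
    (hk : 0 < s k) (y₀ w : Fin n → ℝ) (t : ℝ) :
    ∑ i, s i * Real.exp (ggf_curve n s y₀ w t i) * ggf_vel n s y₀ w t i = 0 := by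
  have hpos := ggf_phi_pos hs hk (fun j => y₀ j + t * w j)
  set φ := ∑ j, s j * Real.exp (y₀ j + t * w j) with hφ
  set A := ∑ j, s j * Real.exp (y₀ j + t * w j) * w j with hA
  have hterm : ∀ i, s i * Real.exp (ggf_curve n s y₀ w t i) * ggf_vel n s y₀ w t i
      = (s i * Real.exp (y₀ i + t * w i) * w i) / φ
        - (s i * Real.exp (y₀ i + t * w i)) * (A / φ ^ 2) := by
    intro i
    simp only [ggf_curve, ggf_vel, Real.exp_sub, Real.exp_log hpos, ← hφ, ← hA]
    field_simp
  rw [Finset.sum_congr rfl fun i _ => hterm i, Finset.sum_sub_distrib, ← Finset.sum_div,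
      ← Finset.sum_mul, ← hφ, ← hA]
  field_simp
  ring

/-- Gauge equivalence of `ρ`-generating functions: let
`s ∈ [0,∞)ⁿ \ {0}`, `E := {y : Σᵢ sᵢ e^{yᵢ} = 1}`, and `H₁, H₂ ∈ C²(U, ℝ)` on a
neighborhood `U ⊇ E`. Then `H₁` and `H₂` generate the same portfolio weights
`πᵢ = (1 − Σⱼ DⱼH)ρᵢ + DᵢH`, with `ρᵢ(y) = sᵢ e^{yᵢ}`, at every `y ∈ E` if and
only if `H₁ − H₂` is constant on `E`. -/
theorem gauge_equivalence_of_generating_functions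
    (n : ℕ) (hn : 0 < n)
    (s : Fin n → ℝ) (hs : ∀ i, 0 ≤ s i) (hs0 : s ≠ 0)
    (E : Set (Fin n → ℝ)) (hE : E = {y | ∑ i, s i * Real.exp (y i) = 1})
    (U : Set (Fin n → ℝ)) (hU : IsOpen U) (hUE : E ⊆ U)
    (H₁ H₂ : (Fin n → ℝ) → ℝ)
    (h1 : ContDiffOn ℝ 2 H₁ U) (h2 : ContDiffOn ℝ 2 H₂ U) :
    (∀ y ∈ E, ∀ i : Fin n,
        (1 - ∑ j, fderiv ℝ H₁ y (Pi.single j 1)) * (s i * Real.exp (y i))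
            + fderiv ℝ H₁ y (Pi.single i 1)
          = (1 - ∑ j, fderiv ℝ H₂ y (Pi.single j 1)) * (s i * Real.exp (y i))
            + fderiv ℝ H₂ y (Pi.single i 1))
      ↔ ∃ c : ℝ, ∀ y ∈ E, H₁ y - H₂ y = c := by
  obtain ⟨k, hk⟩ : ∃ k, 0 < s k := by
    by_contra h
    push_neg at h
    exact hs0 (funext fun i => le_antisymm (h i) (hs i))
  have hmem : ∀ (y₀ w : Fin n → ℝ) (t : ℝ), ggf_curve n s y₀ w t ∈ E := by
    intro y₀ w t; rw [hE]; exact ggf_curve_mem hs hk y₀ w t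
  have hd1 : ∀ y ∈ E, DifferentiableAt ℝ H₁ y := fun y hy =>
    (h1.differentiableOn two_ne_zero).differentiableAt (hU.mem_nhds (hUE hy))
  have hd2 : ∀ y ∈ E, DifferentiableAt ℝ H₂ y := fun y hy =>
    (h2.differentiableOn two_ne_zero).differentiableAt (hU.mem_nhds (hUE hy))
  have hG : ∀ (y₀ w : Fin n → ℝ) (t : ℝ),
      HasDerivAt (fun u => H₁ (ggf_curve n s y₀ w u) - H₂ (ggf_curve n s y₀ w u))
        (fderiv ℝ H₁ (ggf_curve n s y₀ w t) (ggf_vel n s y₀ w t)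
          - fderiv ℝ H₂ (ggf_curve n s y₀ w t) (ggf_vel n s y₀ w t)) t := by
    intro y₀ w t
    have hy := hmem y₀ w t
    have hc := ggf_curve_hasDerivAt hs hk y₀ w t
    exact ((hd1 _ hy).hasFDerivAt.comp_hasDerivAt t hc).sub
      ((hd2 _ hy).hasFDerivAt.comp_hasDerivAt t hc)
  constructor
  · intro hπ
    have hlin : ∀ y ∈ E, ∀ v : Fin n → ℝ,
        fderiv ℝ H₁ y v - fderiv ℝ H₂ y v
          = ((∑ j, fderiv ℝ H₁ y (Pi.single j 1)) - ∑ j, fderiv ℝ H₂ y (Pi.single j 1))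
              * ∑ i, s i * Real.exp (y i) * v i := by
      intro y hy v
      have hpt : ∀ i : Fin n,
          fderiv ℝ H₁ y (Pi.single i 1) - fderiv ℝ H₂ y (Pi.single i 1)
            = ((∑ j, fderiv ℝ H₁ y (Pi.single j 1)) - ∑ j, fderiv ℝ H₂ y (Pi.single j 1))
                * (s i * Real.exp (y i)) := fun i => by linear_combination hπ y hy i
      rw [ggf_clm_apply n (fderiv ℝ H₁ y) v, ggf_clm_apply n (fderiv ℝ H₂ y) v,
        ← Finset.sum_sub_distrib, Finset.mul_sum]
      exact Finset.sum_congr rfl fun i _ => by linear_combination (v i) * hpt i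
    have hb : ggf_curve n s 0 0 0 ∈ E := hmem 0 0 0
    refine ⟨H₁ (ggf_curve n s 0 0 0) - H₂ (ggf_curve n s 0 0 0), ?_⟩
    intro y hy
    set b := ggf_curve n s 0 0 0 with hbdef
    have hzero : ∀ t : ℝ, HasDerivAt
        (fun u => H₁ (ggf_curve n s y (b - y) u) - H₂ (ggf_curve n s y (b - y) u)) 0 t := by
      intro t
      have hD := hG y (b - y) t
      have h0 : fderiv ℝ H₁ (ggf_curve n s y (b - y) t) (ggf_vel n s y (b - y) t)
          - fderiv ℝ H₂ (ggf_curve n s y (b - y) t) (ggf_vel n s y (b - y) t) = 0 := by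
        rw [hlin _ (hmem y (b - y) t) _, ggf_tangent hs hk y (b - y) t, mul_zero]
      rwa [h0] at hD
    have hconst := is_const_of_deriv_eq_zero (fun t => (hzero t).differentiableAt)
      (fun t => (hzero t).deriv) 0 1
    have hyE : ∑ j, s j * Real.exp (y j) = 1 := by rw [hE] at hy; exact hy
    have hbE : ∑ j, s j * Real.exp (b j) = 1 := by rw [hE] at hb; exact hb
    have e0 : ggf_curve n s y (b - y) 0 = y := ggf_curve_zero y _ hyE
    have e1 : ggf_curve n s y (b - y) 1 = b := by
      funext i
      simp only [ggf_curve, Pi.sub_apply, one_mul]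
      rw [show (∑ j, s j * Real.exp (y j + (b j - y j))) = ∑ j, s j * Real.exp (b j) from
        Finset.sum_congr rfl fun j _ => by rw [show y j + (b j - y j) = b j by ring]]
      rw [hbE, Real.log_one, sub_zero]
      ring
    calc H₁ y - H₂ y
        = H₁ (ggf_curve n s y (b - y) 0) - H₂ (ggf_curve n s y (b - y) 0) := by rw [e0]
      _ = H₁ (ggf_curve n s y (b - y) 1) - H₂ (ggf_curve n s y (b - y) 1) := hconst
      _ = H₁ b - H₂ b := by rw [e1]
  · rintro ⟨c, hc⟩ y hy i
    have hyE : ∑ j, s j * Real.exp (y j) = 1 := by rw [hE] at hy; exact hy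
    set v := (Pi.single i 1 : Fin n → ℝ) with hvdef
    have hnum : ∑ m, s m * Real.exp (y m) * v m = s i * Real.exp (y i) := by
      rw [Finset.sum_eq_single i]
      · simp [hvdef]
      · intro m _ hm; simp [hvdef, Pi.single_eq_of_ne hm]
      · intro h; exact absurd (Finset.mem_univ i) h
    have hgc : (fun u => H₁ (ggf_curve n s y v u) - H₂ (ggf_curve n s y v u))
        = fun _ => c := funext fun u => hc _ (hmem y v u)
    have h0 := hG y v 0
    rw [hgc] at h0
    have hval : fderiv ℝ H₁ (ggf_curve n s y v 0) (ggf_vel n s y v 0)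
        - fderiv ℝ H₂ (ggf_curve n s y v 0) (ggf_vel n s y v 0) = 0 :=
      h0.unique (hasDerivAt_const 0 c)
    have hvel : ggf_vel n s y v 0 = fun j => v j - s i * Real.exp (y i) := by
      funext j
      simp only [ggf_vel, zero_mul, add_zero]
      rw [hyE, div_one, hnum]
    have expand : ∀ L : (Fin n → ℝ) →L[ℝ] ℝ,
        L (fun j => v j - s i * Real.exp (y i))
          = L (Pi.single i 1) - s i * Real.exp (y i) * ∑ j, L (Pi.single j 1) := by
      intro L
      rw [ggf_clm_apply n L]
      have hsplit : ∀ j ∈ Finset.univ, (v j - s i * Real.exp (y i)) * L (Pi.single j 1)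
          = v j * L (Pi.single j 1) - (s i * Real.exp (y i)) * L (Pi.single j 1) :=
        fun j _ => by ring
      rw [Finset.sum_congr rfl hsplit, Finset.sum_sub_distrib, ← Finset.mul_sum]
      congr 1
      rw [Finset.sum_eq_single i]
      · simp [hvdef]
      · intro m _ hm; simp [hvdef, Pi.single_eq_of_ne hm]
      · intro h; exact absurd (Finset.mem_univ i) h
    rw [ggf_curve_zero y v hyE, hvel, expand (fderiv ℝ H₁ y), expand (fderiv ℝ H₂ y)] at hval
    linear_combination hval
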